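/- arXiv:1605.00172 — 4 statements merged into one kernel-verified Lean document; each statement's English description precedes it below -/
import Mathlib

section
/- Define c(m_1,...,m_d) as the coefficient of ∏_{i=1}^d t_i^{m_i-1} in the polynomial ∏_{i=1}^d ( (t̂_i^{m_i} - t_i^{m_i}) / (t̂_i - t_i) ), where t̂_i = (∑_{j=1}^d t_j) - t_i. Then c(m_1,...,m_d) equals ∑_{k_1=0}^{m_1-1} ... ∑_{k_d=0}^{m_d-1} f(k_1,...,k_d), where f(k_1,...,k_d) is the coefficient of ∏_{i=1}^d t_i^{k_i} in ∏_{i=1}^d ( ∑_{j≠i} t_j )^{k_i}. -/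
open MvPolynomial Finset

/-- `t̂_i = (∑_j t_j) - t_i`. -/
noncomputable def that (d : ℕ) (i : Fin d) : MvPolynomial (Fin d) ℤ :=
  (∑ j, X j) - X i

/-- The polynomial `∏_i ∑_{k=0}^{m_i-1} t̂_i^k t_i^{m_i-1-k}`. -/
noncomputable def cPoly (d : ℕ) (m : Fin d → ℕ) : MvPolynomial (Fin d) ℤ :=
  ∏ i, ∑ k ∈ Finset.range (m i), (that d i) ^ k * (X i) ^ (m i - 1 - k)

/-- `c(m_1,…,m_d)`: the coefficient of `∏ t_i^{m_i-1}` in `cPoly`. -/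
noncomputable def c (d : ℕ) (m : Fin d → ℕ) : ℤ :=
  MvPolynomial.coeff (Finsupp.equivFunOnFinite.symm fun i => m i - 1) (cPoly d m)

/-- The polynomial `∏_i (∑_{j≠i} t_j)^{k_i}`. -/
noncomputable def fPoly (d : ℕ) (k : Fin d → ℕ) : MvPolynomial (Fin d) ℤ :=
  ∏ i, (∑ j ∈ Finset.univ.erase i, X j) ^ k i

/-- `f(k_1,…,k_d)`: the coefficient of `∏ t_i^{k_i}` in `fPoly`. -/
noncomputable def fC (d : ℕ) (k : Fin d → ℕ) : ℤ :=
  MvPolynomial.coeff (Finsupp.equivFunOnFinite.symm k) (fPoly d k)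

lemma that_eq (d : ℕ) (i : Fin d) : that d i = ∑ j ∈ Finset.univ.erase i, X j := by
  rw [that, ← Finset.add_sum_erase _ _ (Finset.mem_univ i)]
  ring

lemma prod_X_pow (d : ℕ) (e : Fin d → ℕ) :
    (∏ i, (X i : MvPolynomial (Fin d) ℤ) ^ e i) =
      monomial (Finsupp.equivFunOnFinite.symm e) 1 := by
  rw [← prod_X_pow_eq_monomial]
  refine (Finset.prod_subset (Finset.subset_univ _) fun i _ hi => ?_).symm
  simp only [Finsupp.mem_support_iff, ne_eq, not_not,
    Finsupp.coe_equivFunOnFinite_symm] at hi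
  simp [hi]

/-- `c(m_1,…,m_d) = ∑_{k_1=0}^{m_1-1} ⋯ ∑_{k_d=0}^{m_d-1} f(k_1,…,k_d)`. -/
theorem c_eq_sum_f (d : ℕ) (hd : 1 ≤ d) (m : Fin d → ℕ) (hm : ∀ i, 1 ≤ m i) :
    c d m = ∑ k ∈ Fintype.piFinset (fun i => Finset.range (m i)), fC d k := by
  rw [c, cPoly, Finset.prod_univ_sum, MvPolynomial.coeff_sum]
  refine Finset.sum_congr rfl fun k hk => ?_
  have hk' : ∀ i, k i < m i := fun i => by
    simpa using (Fintype.mem_piFinset.mp hk) i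
  rw [Finset.prod_mul_distrib, prod_X_pow, coeff_mul_monomial']
  have hle : (Finsupp.equivFunOnFinite.symm fun i => m i - 1 - k i) ≤
      Finsupp.equivFunOnFinite.symm fun i => m i - 1 := by
    intro i
    simp only [Finsupp.coe_equivFunOnFinite_symm]
    omega
  rw [if_pos hle, mul_one]
  have hsub : (Finsupp.equivFunOnFinite.symm fun i => m i - 1) -
      (Finsupp.equivFunOnFinite.symm fun i => m i - 1 - k i) =
      Finsupp.equivFunOnFinite.symm k := by
    ext i
    simp only [Finsupp.coe_tsub, Pi.sub_apply, Finsupp.coe_equivFunOnFinite_symm]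
    have := hk' i; have := hm i; omega
  rw [hsub, fC, fPoly]
  congr 1
  exact Finset.prod_congr rfl fun i _ => by rw [that_eq]
end

section
/- Let f(k_1,...,k_d) be the coefficient of ∏_{i=1}^d t_i^{k_i} in ∏_{i=1}^d ( ∑_{j≠i} t_j )^{k_i}. Then the multivariate generating function ∑_{k_1,...,k_d ≥ 0} f(k_1,...,k_d) x_1^{k_1}...x_d^{k_d} equals 1 / (1 - ∑_{i=2}^d (i-1) e_i(x_1,...,x_d)), where e_i is the elementary symmetric polynomial of degree i. -/
open MvPolynomial Finset

/-- The generating function of `f` as a formal power series. -/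
noncomputable def Fser (d : ℕ) : MvPowerSeries (Fin d) ℤ :=
  fun e => fC d (fun i => e i)

/-- The denominator `1 - ∑_{i=2}^d (i-1) e_i(x_1,…,x_d)` as a power series. -/
noncomputable def Dden (d : ℕ) : MvPowerSeries (Fin d) ℤ :=
  ((1 - ∑ i ∈ Finset.Icc 2 d, ((i : ℤ) - 1) • MvPolynomial.esymm (Fin d) ℤ i :
     MvPolynomial (Fin d) ℤ) : MvPowerSeries (Fin d) ℤ)

/-! ### Auxiliary lemmas for the proof -/

section Aux

variable {d : ℕ}

/-- The exponent finsupp of the squarefree monomial on a set `S`. -/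
noncomputable def eSexp (S : Finset (Fin d)) : Fin d →₀ ℕ := ∑ i ∈ S, Finsupp.single i 1

lemma eSexp_def (S : Finset (Fin d)) : eSexp S = ∑ i ∈ S, Finsupp.single i 1 := rfl

lemma eSexp_apply (S : Finset (Fin d)) (j : Fin d) :
    eSexp S j = if j ∈ S then 1 else 0 := by
  classical
  rw [eSexp, Finsupp.finset_sum_apply]
  simp [Finsupp.single_apply, Finset.sum_ite_eq' S j (fun _ => 1)]

lemma prod_X_eq (S : Finset (Fin d)) :
    (∏ i ∈ S, X i : MvPolynomial (Fin d) ℤ) = monomial (eSexp S) 1 := by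
  classical
  induction S using Finset.induction_on with
  | empty => simp [eSexp]
  | @insert a S ha ih =>
    rw [Finset.prod_insert ha, ih, X, monomial_mul, one_mul]
    congr 1
    rw [eSexp, eSexp, Finset.sum_insert ha]

lemma eSexp_le_iff (S : Finset (Fin d)) (e : Fin d →₀ ℕ) :
    eSexp S ≤ e ↔ S ⊆ e.support := by
  constructor
  · intro h j hj
    have := h j
    rw [eSexp_apply, if_pos hj] at this
    exact Finsupp.mem_support_iff.mpr (by omega)
  · intro h j
    rw [eSexp_apply]
    split_ifs with hj
    · exact Nat.one_le_iff_ne_zero.mpr (Finsupp.mem_support_iff.mp (h hj))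
    · exact Nat.zero_le _

lemma coeff_prodX_mul (S : Finset (Fin d)) (e : Fin d →₀ ℕ) (h : eSexp S ≤ e)
    (W : MvPolynomial (Fin d) ℤ) :
    coeff e ((∏ i ∈ S, X i) * W) = coeff (e - eSexp S) W := by
  rw [prod_X_eq]
  have he : e = eSexp S + (e - eSexp S) := by
    ext j; have := h j
    simp only [Finsupp.coe_add, Finsupp.coe_tsub, Pi.add_apply, Pi.sub_apply]
    omega
  rw [he] at *
  rw [coeff_monomial_mul, one_mul]
  congr 1
  ext j
  simp only [Finsupp.coe_add, Finsupp.coe_tsub, Pi.add_apply, Pi.sub_apply]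
  omega

lemma coeff_vanish (e : Fin d →₀ ℕ) (t : Finset (Fin d)) (h : ∀ j ∈ t, e j = 0)
    (W : MvPolynomial (Fin d) ℤ) :
    coeff e ((∑ j ∈ t, X j) * W) = 0 := by
  rw [Finset.sum_mul, coeff_sum]
  refine Finset.sum_eq_zero fun j hj => ?_
  rw [mul_comm, coeff_mul_X', if_neg]
  simp [Finsupp.mem_support_iff, h j hj]

lemma cardsum {ι R : Type*} [CommRing R] [DecidableEq ι] (s : Finset ι) (f g : ι → R) :
    ∑ S ∈ s.powerset, (S.card : R) * ((∏ i ∈ S, f i) * ∏ i ∈ s \ S, g i)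
      = ∑ j ∈ s, f j * ∏ i ∈ s.erase j, (f i + g i) := by
  induction s using Finset.induction_on with
  | empty => simp
  | @insert a s ha ih =>
    rw [Finset.sum_powerset_insert ha]
    have h1 : ∀ S ∈ s.powerset, (insert a s) \ S = insert a (s \ S) := by
      intro S hS
      simp only [Finset.mem_powerset] at hS
      rw [Finset.insert_sdiff_of_notMem _ (fun h => ha (hS h))]
    have h2 : ∀ S ∈ s.powerset, (insert a s) \ (insert a S) = s \ S := by
      intro S hS
      simp only [Finset.mem_powerset] at hS
      ext x
      simp only [Finset.mem_sdiff, Finset.mem_insert]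
      constructor
      · rintro ⟨hx1 | hx1, hx2⟩
        · exact absurd (Or.inl hx1) hx2
        · exact ⟨hx1, fun h => hx2 (Or.inr h)⟩
      · rintro ⟨hx1, hx2⟩
        exact ⟨Or.inr hx1, by rintro (rfl | h); exacts [ha hx1, hx2 h]⟩
    have e1 : ∑ S ∈ s.powerset, (S.card : R) * ((∏ i ∈ S, f i) * ∏ i ∈ (insert a s) \ S, g i)
        = g a * ∑ S ∈ s.powerset, (S.card : R) * ((∏ i ∈ S, f i) * ∏ i ∈ s \ S, g i) := by
      rw [Finset.mul_sum]
      refine Finset.sum_congr rfl fun S hS => ?_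
      rw [h1 S hS, Finset.prod_insert (by
        simp only [Finset.mem_sdiff]; exact fun h => ha h.1)]
      ring
    have e2 : ∑ S ∈ s.powerset, ((insert a S).card : R) *
          ((∏ i ∈ insert a S, f i) * ∏ i ∈ (insert a s) \ (insert a S), g i)
        = f a * (∑ S ∈ s.powerset, (S.card : R) * ((∏ i ∈ S, f i) * ∏ i ∈ s \ S, g i))
          + f a * ∏ i ∈ s, (f i + g i) := by
      rw [Finset.prod_add, Finset.mul_sum, Finset.mul_sum, ← Finset.sum_add_distrib]
      refine Finset.sum_congr rfl fun S hS => ?_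
      have haS : a ∉ S := fun h => ha (Finset.mem_powerset.mp hS h)
      rw [h2 S hS, Finset.card_insert_of_notMem haS, Finset.prod_insert haS]
      push_cast; ring
    rw [e1, e2, ih]
    rw [Finset.sum_insert ha, Finset.erase_insert ha]
    have e3 : ∀ j ∈ s, (insert a s).erase j = insert a (s.erase j) := by
      intro j hj
      rw [Finset.erase_insert_of_ne]; rintro rfl; exact ha hj
    have e4 : ∑ j ∈ s, f j * ∏ i ∈ (insert a s).erase j, (f i + g i)
        = (f a + g a) * ∑ j ∈ s, f j * ∏ i ∈ s.erase j, (f i + g i) := by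
      rw [Finset.mul_sum]
      refine Finset.sum_congr rfl fun j hj => ?_
      rw [e3 j hj, Finset.prod_insert (fun h => ha (Finset.mem_erase.mp h).2)]
      ring
    rw [e4]; ring

lemma core (P : Finset (Fin d)) (hP : P.Nonempty) :
    ∑ S ∈ P.powerset, (1 - (S.card : ℤ)) • ((∏ i ∈ S, X i) * ∏ i ∈ P \ S, that d i)
      = (∑ j ∈ Pᶜ, X j) * (∑ j, X j) ^ (P.card - 1) := by
  have hXt : ∀ i : Fin d, X i + that d i = ∑ j, X j := fun i => by
    rw [that]; ring
  have split : ∀ S ∈ P.powerset,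
      (1 - (S.card : ℤ)) • ((∏ i ∈ S, X i) * ∏ i ∈ P \ S, that d i)
      = ((∏ i ∈ S, X i) * ∏ i ∈ P \ S, that d i)
        - (S.card : MvPolynomial (Fin d) ℤ) * ((∏ i ∈ S, X i) * ∏ i ∈ P \ S, that d i) := by
    intro S _
    rw [zsmul_eq_mul]
    push_cast
    ring
  rw [Finset.sum_congr rfl split, Finset.sum_sub_distrib]
  have hA : ∑ S ∈ P.powerset, (∏ i ∈ S, X i) * ∏ i ∈ P \ S, that d i
      = (∑ j, X j) ^ P.card := by
    rw [← Finset.prod_add, Finset.prod_congr rfl fun i _ => hXt i, Finset.prod_const]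
  have hB : ∑ S ∈ P.powerset,
        (S.card : MvPolynomial (Fin d) ℤ) * ((∏ i ∈ S, X i) * ∏ i ∈ P \ S, that d i)
      = (∑ j ∈ P, X j) * (∑ j, X j) ^ (P.card - 1) := by
    rw [cardsum P (fun i => (X i : MvPolynomial (Fin d) ℤ)) (that d)]
    rw [Finset.sum_mul]
    refine Finset.sum_congr rfl fun j hj => ?_
    rw [Finset.prod_congr rfl fun i _ => hXt i, Finset.prod_const,
      Finset.card_erase_of_mem hj]
  rw [hA, hB]
  have hcard : P.card = (P.card - 1) + 1 :=
    (Nat.succ_pred_eq_of_pos (Finset.card_pos.mpr hP)).symm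
  rw [hcard, pow_succ, Nat.add_sub_cancel]
  have hsum : (∑ j, (X j : MvPolynomial (Fin d) ℤ)) = ∑ j ∈ P, X j + ∑ j ∈ Pᶜ, X j :=
    (Finset.sum_add_sum_compl P _).symm
  rw [hsum]
  ring

lemma fPoly_eq (k : Fin d → ℕ) : fPoly d k = ∏ i, that d i ^ k i := by
  refine Finset.prod_congr rfl fun i _ => ?_
  rw [that, Finset.sum_erase_eq_sub (Finset.mem_univ i)]

lemma decomp (e : Fin d →₀ ℕ) (S : Finset (Fin d)) (hS : S ⊆ e.support) :
    (∏ i, that d i ^ ((e - eSexp S) i)) =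
      ((∏ _i ∈ S, (1:MvPolynomial (Fin d) ℤ)) * ∏ i ∈ e.support \ S, that d i) *
        ∏ i ∈ e.support, that d i ^ (e i - 1) := by
  rw [Finset.prod_const_one, one_mul]
  have h0 : ∀ x : Fin d, x ∉ e.support → that d x ^ ((e - eSexp S) x) = 1 := by
    intro x hx
    have hx0 : e x = 0 := Finsupp.notMem_support_iff.mp hx
    have hxS : x ∉ S := fun h => hx (hS h)
    rw [Finsupp.tsub_apply, eSexp_apply, if_neg hxS, hx0]
    simp
  rw [← Finset.prod_subset (Finset.subset_univ e.support) (fun x _ hx => h0 x hx)]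
  rw [← Finset.prod_sdiff hS]
  have h1 : ∀ i ∈ S, that d i ^ ((e - eSexp S) i) = that d i ^ (e i - 1) := by
    intro i hi
    rw [Finsupp.tsub_apply, eSexp_apply, if_pos hi]
  have h2 : ∀ i ∈ e.support \ S, that d i ^ ((e - eSexp S) i)
      = that d i * that d i ^ (e i - 1) := by
    intro i hi
    rw [Finset.mem_sdiff] at hi
    have he1 : 1 ≤ e i := Nat.one_le_iff_ne_zero.mpr (Finsupp.mem_support_iff.mp hi.1)
    rw [Finsupp.tsub_apply, eSexp_apply, if_neg hi.2, Nat.sub_zero]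
    conv_lhs => rw [show e i = 1 + (e i - 1) by omega]
    rw [pow_add, pow_one]
  rw [Finset.prod_congr rfl h1, Finset.prod_congr rfl h2, Finset.prod_mul_distrib]
  rw [← Finset.prod_sdiff hS (f := fun i => that d i ^ (e i - 1))]
  ring

lemma recursion (e : Fin d →₀ ℕ) (he : e ≠ 0) :
    ∑ S ∈ e.support.powerset, (1 - (S.card : ℤ)) * fC d (fun i => (e - eSexp S) i) = 0 := by
  have hP : e.support.Nonempty := Finsupp.support_nonempty_iff.mpr he
  set Cfac : MvPolynomial (Fin d) ℤ := ∏ i ∈ e.support, that d i ^ (e i - 1) with hC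
  have step : ∀ S ∈ e.support.powerset,
      (1 - (S.card : ℤ)) * fC d (fun i => (e - eSexp S) i)
        = coeff e ((1 - (S.card : ℤ)) •
            (((∏ i ∈ S, X i) * ∏ i ∈ e.support \ S, that d i) * Cfac)) := by
    intro S hS
    rw [Finset.mem_powerset] at hS
    rw [coeff_smul, smul_eq_mul]
    congr 1
    have h1 : fC d (fun i => (e - eSexp S) i)
        = coeff (e - eSexp S) (∏ i, that d i ^ ((e - eSexp S) i)) := by
      rw [fC, fPoly_eq, Finsupp.equivFunOnFinite_symm_coe]
    rw [h1, ← coeff_prodX_mul S e ((eSexp_le_iff S e).mpr hS), decomp e S hS]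
    congr 1
    rw [Finset.prod_const_one, one_mul]
    ring
  rw [Finset.sum_congr rfl step, ← coeff_sum]
  have hmain : ∑ S ∈ e.support.powerset, (1 - (S.card : ℤ)) •
      (((∏ i ∈ S, X i) * ∏ i ∈ e.support \ S, that d i) * Cfac)
      = ((∑ j ∈ e.supportᶜ, X j) * (∑ j, X j) ^ (e.support.card - 1)) * Cfac := by
    rw [← core e.support hP, Finset.sum_mul]
    exact Finset.sum_congr rfl fun S _ => (smul_mul_assoc _ _ _).symm
  rw [hmain, mul_assoc]
  exact coeff_vanish e _ (fun j hj => Finsupp.notMem_support_iff.mp (Finset.mem_compl.mp hj)) _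

lemma antidiag_pick (e v : Fin d →₀ ℕ) (G : (Fin d →₀ ℕ) → ℤ) :
    ∑ p ∈ Finset.HasAntidiagonal.antidiagonal e, G p.1 * (if v = p.2 then (1:ℤ) else 0)
      = if v ≤ e then G (e - v) else 0 := by
  by_cases hv : v ≤ e
  · rw [if_pos hv, Finset.sum_eq_single ((e - v), v)]
    · rw [if_pos rfl, mul_one]
    · rintro ⟨a, b⟩ hab hne
      rw [Finset.HasAntidiagonal.mem_antidiagonal] at hab
      by_cases hb : v = b
      · exfalso
        apply hne
        subst hb
        have : a = e - v := by
          ext j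
          have hj : (a + v) j = e j := by rw [hab]
          simp only [Finsupp.add_apply] at hj
          simp only [Finsupp.coe_tsub, Pi.sub_apply]
          omega
        rw [this]
      · rw [if_neg hb, mul_zero]
    · intro h
      exact absurd (Finset.HasAntidiagonal.mem_antidiagonal.mpr (tsub_add_cancel_of_le hv)) h
  · rw [if_neg hv]
    refine Finset.sum_eq_zero fun p hp => ?_
    rw [Finset.HasAntidiagonal.mem_antidiagonal] at hp
    rw [if_neg, mul_zero]
    rintro rfl
    exact hv (by rw [← hp]; exact le_add_self)

lemma antidiag_pick' (e v : Fin d →₀ ℕ) :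
    ∑ p ∈ Finset.HasAntidiagonal.antidiagonal e, fC d (fun i => p.1 i) * (if v = p.2 then (1:ℤ) else 0)
      = if v ≤ e then fC d (fun i => (e - v) i) else 0 :=
  antidiag_pick e v (fun w => fC d (fun i => w i))

end Aux

/-- MacMahon Master Theorem for this matrix:
`∑ f(k) x^k = 1 / (1 - ∑_{i=2}^d (i-1) e_i(x))`, i.e. the generating function of `f`
times the denominator equals `1`. -/
theorem gf_f_eq (d : ℕ) : Fser d * Dden d = 1 := by
  ext e
  rw [MvPowerSeries.coeff_mul, MvPowerSeries.coeff_one]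
  have hF : ∀ v : Fin d →₀ ℕ, MvPowerSeries.coeff v (Fser d) = fC d (fun i => v i) :=
    fun v => rfl
  have hD : ∀ v : Fin d →₀ ℕ, MvPowerSeries.coeff v (Dden d)
      = (if (0:Fin d →₀ ℕ) = v then 1 else 0)
        - ∑ i ∈ Finset.Icc 2 d, ((i : ℤ) - 1) *
            ∑ S ∈ Finset.powersetCard i Finset.univ, (if eSexp S = v then (1:ℤ) else 0) := by
    intro v
    rw [Dden, MvPolynomial.coeff_coe, MvPolynomial.coeff_sub, MvPolynomial.coeff_one,
      MvPolynomial.coeff_sum]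
    refine congrArg₂ (· - ·) rfl ?_
    refine Finset.sum_congr rfl fun i _ => ?_
    rw [MvPolynomial.coeff_smul, esymm_eq_sum_monomial, MvPolynomial.coeff_sum, smul_eq_mul]
    refine congrArg₂ (· * ·) rfl ?_
    refine Finset.sum_congr rfl fun S _ => ?_
    rw [MvPolynomial.coeff_monomial, ← eSexp_def]
  -- split the convolution
  have hsplit : ∑ p ∈ Finset.HasAntidiagonal.antidiagonal e,
        MvPowerSeries.coeff p.1 (Fser d) * MvPowerSeries.coeff p.2 (Dden d)
      = fC d (fun i => e i)
        - ∑ i ∈ Finset.Icc 2 d, ((i : ℤ) - 1) *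
            ∑ S ∈ Finset.powersetCard i Finset.univ,
              (if eSexp S ≤ e then fC d (fun j => (e - eSexp S) j) else 0) := by
    have h1 : ∀ p ∈ Finset.HasAntidiagonal.antidiagonal e,
        MvPowerSeries.coeff p.1 (Fser d) * MvPowerSeries.coeff p.2 (Dden d)
        = fC d (fun i => p.1 i) * (if (0:Fin d →₀ ℕ) = p.2 then (1:ℤ) else 0)
          - ∑ i ∈ Finset.Icc 2 d, ((i : ℤ) - 1) *
              ∑ S ∈ Finset.powersetCard i Finset.univ,
                (fC d (fun j => p.1 j) * if eSexp S = p.2 then (1:ℤ) else 0) := by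
      intro p _
      rw [hF, hD]
      rw [mul_sub]
      refine congrArg₂ (· - ·) rfl ?_
      · rw [Finset.mul_sum]
        refine Finset.sum_congr rfl fun i _ => ?_
        rw [← Finset.mul_sum]
        ring
    rw [Finset.sum_congr rfl h1, Finset.sum_sub_distrib]
    refine congrArg₂ (· - ·) ?_ ?_
    · rw [antidiag_pick' e 0, if_pos (zero_le (a := e)), tsub_zero]
    · rw [Finset.sum_comm]
      refine Finset.sum_congr rfl fun i _ => ?_
      rw [← Finset.mul_sum]
      refine congrArg₂ (· * ·) rfl ?_
      rw [Finset.sum_comm]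
      exact Finset.sum_congr rfl fun S _ => antidiag_pick' e (eSexp S)
  rw [hsplit]
  by_cases he : e = 0
  · subst he
    rw [if_pos rfl]
    have hz : ∑ i ∈ Finset.Icc 2 d, ((i : ℤ) - 1) *
        ∑ S ∈ Finset.powersetCard i Finset.univ,
          (if eSexp S ≤ (0:Fin d →₀ ℕ) then fC d (fun j => ((0:Fin d →₀ ℕ) - eSexp S) j) else 0)
        = 0 := by
      refine Finset.sum_eq_zero fun i hi => ?_
      rw [Finset.mem_Icc] at hi
      have : ∑ S ∈ Finset.powersetCard i Finset.univ,
          (if eSexp S ≤ (0:Fin d →₀ ℕ) then fC d (fun j => ((0:Fin d →₀ ℕ) - eSexp S) j) else 0)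
          = 0 := by
        refine Finset.sum_eq_zero fun S hS => ?_
        rw [Finset.mem_powersetCard] at hS
        rw [if_neg]
        intro hle
        have hSne : S.Nonempty := by
          rw [← Finset.card_pos, hS.2]; omega
        obtain ⟨j, hj⟩ := hSne
        have := hle j
        rw [eSexp_apply, if_pos hj] at this
        simp at this
      rw [this, mul_zero]
    rw [hz, sub_zero]
    show fC d (fun i => (0:Fin d →₀ ℕ) i) = 1
    rw [fC, fPoly]
    have : ∀ i : Fin d, ((∑ j ∈ Finset.univ.erase i, X j : MvPolynomial (Fin d) ℤ)
        ^ ((0:Fin d →₀ ℕ) i)) = 1 := by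
      intro i; simp
    rw [Finset.prod_congr rfl fun i _ => this i, Finset.prod_const_one]
    rw [MvPolynomial.coeff_one, if_pos]
    ext j
    simp
  · rw [if_neg he]
    -- transform the double sum into a sum over subsets of the support
    set W : Finset (Fin d) → ℤ := fun S =>
      ((S.card : ℤ) - 1) * (if eSexp S ≤ e then fC d (fun j => (e - eSexp S) j) else 0) with hW
    have hT1 : ∑ i ∈ Finset.Icc 2 d, ((i : ℤ) - 1) *
        ∑ S ∈ Finset.powersetCard i Finset.univ,
          (if eSexp S ≤ e then fC d (fun j => (e - eSexp S) j) else 0)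
        = ∑ S ∈ e.support.powerset, ((S.card : ℤ) - 1) * fC d (fun j => (e - eSexp S) j)
          + fC d (fun i => e i) := by
      have g1 : ∀ i ∈ Finset.Icc 2 d, ((i : ℤ) - 1) *
          ∑ S ∈ Finset.powersetCard i Finset.univ,
            (if eSexp S ≤ e then fC d (fun j => (e - eSexp S) j) else 0)
          = ∑ S ∈ Finset.powersetCard i Finset.univ, W S := by
        intro i _
        rw [Finset.mul_sum]
        refine Finset.sum_congr rfl fun S hS => ?_
        rw [Finset.mem_powersetCard] at hS
        rw [hW]
        simp only [hS.2]
      rw [Finset.sum_congr rfl g1]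
      have hIcc : Finset.Icc 2 d = (Finset.range (d+1)).filter (fun i => 2 ≤ i) := by
        ext i
        simp only [Finset.mem_Icc, Finset.mem_filter, Finset.mem_range]
        omega
      rw [hIcc, Finset.sum_filter]
      have hg0 : ∑ S ∈ Finset.powersetCard 0 (Finset.univ : Finset (Fin d)), W S
          = -(fC d (fun i => e i)) := by
        rw [Finset.powersetCard_zero, Finset.sum_singleton, hW]
        simp only [Finset.card_empty, Nat.cast_zero, zero_sub]
        have h0 : eSexp (∅ : Finset (Fin d)) = 0 := by rw [eSexp, Finset.sum_empty]
        rw [h0, if_pos (zero_le (a := e)), tsub_zero]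
        ring
      have hg1 : ∑ S ∈ Finset.powersetCard 1 (Finset.univ : Finset (Fin d)), W S = 0 := by
        refine Finset.sum_eq_zero fun S hS => ?_
        rw [Finset.mem_powersetCard] at hS
        rw [hW]
        simp only [hS.2, Nat.cast_one, sub_self, zero_mul]
      have key : ∀ i ∈ Finset.range (d+1),
          (if 2 ≤ i then ∑ S ∈ Finset.powersetCard i Finset.univ, W S else 0)
          = (∑ S ∈ Finset.powersetCard i (Finset.univ : Finset (Fin d)), W S)
            + (if i = 0 then fC d (fun j => e j) else 0) := by
        intro i _
        rcases Nat.lt_or_ge i 2 with h2 | h2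
        · interval_cases i
          · rw [if_neg (by omega), if_pos rfl, hg0]; ring
          · rw [if_neg (by omega), if_neg (by omega), hg1]; ring
        · rw [if_pos h2, if_neg (by omega), add_zero]
      rw [Finset.sum_congr rfl key, Finset.sum_add_distrib]
      have hz : ∑ i ∈ Finset.range (d+1), (if i = 0 then fC d (fun j => e j) else 0)
          = fC d (fun j => e j) := by
        rw [Finset.sum_ite_eq' (Finset.range (d+1)) 0 (fun _ => fC d (fun j => e j))]
        rw [if_pos (Finset.mem_range.mpr (by omega))]
      rw [hz]
      congr 1
      have hpow : ∑ i ∈ Finset.range (d+1),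
          ∑ S ∈ Finset.powersetCard i (Finset.univ : Finset (Fin d)), W S
          = ∑ S ∈ (Finset.univ : Finset (Fin d)).powerset, W S := by
        rw [Finset.sum_powerset]
        rw [Finset.card_univ, Fintype.card_fin]
      rw [hpow]
      rw [← Finset.sum_subset (Finset.powerset_mono.mpr (Finset.subset_univ e.support))
        (fun S _ hS => ?_)]
      · refine Finset.sum_congr rfl fun S hS => ?_
        rw [Finset.mem_powerset] at hS
        rw [hW]
        simp only [if_pos ((eSexp_le_iff S e).mpr hS)]
      · rw [Finset.mem_powerset] at hS
        rw [hW]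
        simp only
        rw [if_neg (fun h => hS ((eSexp_le_iff S e).mp h)), mul_zero]
    rw [hT1]
    have hrec := recursion e he
    have hrec' : ∑ S ∈ e.support.powerset, ((S.card : ℤ) - 1) * fC d (fun j => (e - eSexp S) j)
        = 0 := by
      have : ∑ S ∈ e.support.powerset, ((S.card : ℤ) - 1) * fC d (fun j => (e - eSexp S) j)
          = -∑ S ∈ e.support.powerset, (1 - (S.card : ℤ)) * fC d (fun j => (e - eSexp S) j) := by
        rw [← Finset.sum_neg_distrib]
        exact Finset.sum_congr rfl fun S _ => by ring
      rw [this, hrec, neg_zero]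
    rw [hrec']
    ring
end

section
/- For the d×d matrix A with all off-diagonal entries equal to 1 and diagonal entries 0, det(I_d - diag(x_1,...,x_d)·A) = 1 - ∑_{i=2}^d (i-1) e_i(x_1,...,x_d), where e_i denotes the elementary symmetric polynomial of degree i in x_1,...,x_d. -/
open MvPolynomial

/-- det of the matrix with 0 on the diagonal and -1 off it. -/
lemma det_zero_diag_neg_one {n : Type*} [Fintype n] [DecidableEq n]
    {R : Type*} [CommRing R] :
    Matrix.det (Matrix.of fun i j : n => if i = j then (0 : R) else -1) =
      1 - (Fintype.card n : R) := by
  have h : (Matrix.of fun i j : n => if i = j then (0 : R) else -1) =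
      1 + Matrix.replicateCol Unit (fun _ : n => (-1 : R)) * Matrix.replicateRow Unit (fun _ : n => (1 : R)) := by
    ext i j
    by_cases hij : i = j <;>
      simp [Matrix.one_apply, hij, Matrix.mul_apply]
  rw [h, Matrix.det_one_add_replicateCol_mul_replicateRow]
  simp [dotProduct, sub_eq_add_neg]

lemma det_piecewise {n : Type*} [Fintype n] [DecidableEq n]
    {R : Type*} [CommRing R] (S : Finset n) :
    Matrix.det (Matrix.of (S.piecewise
        (fun i j => if i = j then (0 : R) else -1)
        (fun i j => if i = j then (1 : R) else 0))) = 1 - (S.card : R) := by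
  classical
  set M : Matrix n n R := Matrix.of (S.piecewise
      (fun i j => if i = j then (0 : R) else -1)
      (fun i j => if i = j then (1 : R) else 0)) with hM
  let e : {x // x ∈ S} ⊕ {x // x ∉ S} ≃ n := Equiv.sumCompl (· ∈ S)
  have hsub : M.submatrix e e =
      Matrix.fromBlocks (Matrix.of fun i j : {x // x ∈ S} => if i = j then (0 : R) else -1)
        (Matrix.of fun _ _ => (-1 : R)) 0 1 := by
    ext i j
    rcases i with i | i <;> rcases j with j | j
    · have hi : (e (Sum.inl i)) ∈ S := i.2
      simp only [Matrix.submatrix_apply, hM, Matrix.of_apply, e, Equiv.sumCompl_apply_inl]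
      rw [Finset.piecewise_eq_of_mem _ _ _ i.2]
      by_cases h : i = j
      · simp [h]
      · have h' : (i : n) ≠ (j : n) := fun hc => h (Subtype.ext hc)
        simp [h, h']
    · simp only [Matrix.submatrix_apply, hM, Matrix.of_apply, e, Equiv.sumCompl_apply_inl,
        Equiv.sumCompl_apply_inr]
      rw [Finset.piecewise_eq_of_mem _ _ _ i.2]
      have h' : (i : n) ≠ (j : n) := by
        intro hc; exact j.2 (hc ▸ i.2)
      simp [h']
    · simp only [Matrix.submatrix_apply, hM, Matrix.of_apply, e, Equiv.sumCompl_apply_inl,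
        Equiv.sumCompl_apply_inr]
      rw [Finset.piecewise_eq_of_notMem _ _ _ i.2]
      have h' : (i : n) ≠ (j : n) := by
        intro hc; exact i.2 (hc ▸ j.2)
      simp [h']
    · simp only [Matrix.submatrix_apply, hM, Matrix.of_apply, e, Equiv.sumCompl_apply_inr]
      rw [Finset.piecewise_eq_of_notMem _ _ _ i.2]
      by_cases h : i = j
      · simp [h, Matrix.one_apply]
      · have h' : (i : n) ≠ (j : n) := fun hc => h (Subtype.ext hc)
        simp [h, h', Matrix.one_apply]
  have := Matrix.det_submatrix_equiv_self e M
  rw [← this, hsub, Matrix.det_fromBlocks_zero₂₁, det_zero_diag_neg_one, Matrix.det_one,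
    mul_one, Fintype.card_coe]

/-- For the `d×d` matrix `A` with off-diagonal entries `1` and diagonal `0`,
`det(I - diag(x)·A) = 1 - ∑_{i=2}^d (i-1) e_i(x_1,…,x_d)`. -/
theorem det_diag_adjK (d : ℕ) :
    Matrix.det
      ((1 : Matrix (Fin d) (Fin d) (MvPolynomial (Fin d) ℤ)) -
        Matrix.diagonal (fun i => X i) *
          Matrix.of (fun i j => if i = j then 0 else 1)) =
      1 - ∑ i ∈ Finset.Icc 2 d, ((i : ℤ) - 1) • MvPolynomial.esymm (Fin d) ℤ i := by
  classical
  set R := MvPolynomial (Fin d) ℤ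
  set c : Fin d → Fin d → R := fun i j => if i = j then (0 : R) else -1 with hc
  set b : Fin d → Fin d → R := fun i j => if i = j then (1 : R) else 0 with hb
  have hM : ((1 : Matrix (Fin d) (Fin d) R) -
        Matrix.diagonal (fun i => X i) *
          Matrix.of (fun i j => if i = j then 0 else 1)) =
      Matrix.of ((fun i => (X i : R) • c i) + b) := by
    ext i j : 1
    simp only [Matrix.sub_apply, Matrix.one_apply, Matrix.diagonal_mul, Matrix.of_apply,
      Pi.add_apply, Pi.smul_apply, smul_eq_mul, hc, hb]
    by_cases h : i = j
    · simp [h]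
    · simp only [if_neg h]
      simp
  rw [hM]
  have hdet : ∀ N : Matrix (Fin d) (Fin d) R, N.det =
      (Matrix.detRowAlternating : (Fin d → R) [⋀^Fin d]→ₗ[R] R) N := fun _ => rfl
  rw [hdet]
  have expand := (Matrix.detRowAlternating :
      (Fin d → R) [⋀^Fin d]→ₗ[R] R).toMultilinearMap.map_add_univ
      (fun i => (X i : R) • c i) b
  simp only [AlternatingMap.coe_multilinearMap] at expand
  have key : ∀ S : Finset (Fin d),
      (Matrix.detRowAlternating : (Fin d → R) [⋀^Fin d]→ₗ[R] R)
        (S.piecewise (fun i => (X i : R) • c i) b) =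
      (1 - (S.card : R)) * ∏ i ∈ S, X i := by
    intro S
    have hpw : S.piecewise (fun i => (X i : R) • c i) b =
        S.piecewise (fun i => (X i : R) • (S.piecewise c b) i) (S.piecewise c b) := by
      ext i j
      by_cases h : i ∈ S
      · simp [Finset.piecewise_eq_of_mem _ _ _ h]
      · simp [Finset.piecewise_eq_of_notMem _ _ _ h]
    rw [hpw]
    have := (Matrix.detRowAlternating :
        (Fin d → R) [⋀^Fin d]→ₗ[R] R).toMultilinearMap.map_piecewise_smul
        (fun i => (X i : R)) (S.piecewise c b) S
    simp only [AlternatingMap.coe_multilinearMap] at this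
    rw [this]
    have hdp : (Matrix.detRowAlternating : (Fin d → R) [⋀^Fin d]→ₗ[R] R)
        (S.piecewise c b) = 1 - (S.card : R) := by
      exact det_piecewise S
    rw [hdp, smul_eq_mul, mul_comm]
  rw [show Matrix.of ((fun i => (X i : R) • c i) + b) =
      ((fun i => (X i : R) • c i) + b : Fin d → Fin d → R) from rfl]
  rw [expand]
  simp only [key]
  -- regroup by cardinality
  rw [← Finset.powerset_univ, Finset.sum_powerset]
  have hcard : (Finset.univ : Finset (Fin d)).card = d := by simp
  rw [hcard]
  have inner : ∀ k ∈ Finset.range (d + 1),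
      (∑ S ∈ Finset.powersetCard k (Finset.univ : Finset (Fin d)),
        (1 - (S.card : R)) * ∏ i ∈ S, X i) =
      (1 - (k : R)) * MvPolynomial.esymm (Fin d) ℤ k := by
    intro k _
    rw [MvPolynomial.esymm, Finset.mul_sum]
    refine Finset.sum_congr rfl fun S hS => ?_
    rw [(Finset.mem_powersetCard.mp hS).2]
  rw [Finset.sum_congr rfl inner]
  -- split off k = 0, 1
  have hsplit : Finset.range (d + 1) =
      (Finset.range (d + 1)).filter (fun k => ¬ 2 ≤ k) ∪ Finset.Icc 2 d := by
    ext k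
    simp only [Finset.mem_union, Finset.mem_filter, Finset.mem_range, Finset.mem_Icc]
    omega
  have hdisj : Disjoint ((Finset.range (d + 1)).filter (fun k => ¬ 2 ≤ k))
      (Finset.Icc 2 d) := by
    rw [Finset.disjoint_left]
    intro k hk hk2
    simp only [Finset.mem_filter] at hk
    exact hk.2 (Finset.mem_Icc.mp hk2).1
  rw [hsplit, Finset.sum_union hdisj]
  have hlow : ∑ k ∈ (Finset.range (d + 1)).filter (fun k => ¬ 2 ≤ k),
      (1 - (k : R)) * MvPolynomial.esymm (Fin d) ℤ k = 1 := by
    rw [Finset.sum_eq_single_of_mem 0]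
    · simp [MvPolynomial.esymm_zero]
    · simp [Finset.mem_filter]
    · intro k hk hk0
      simp only [Finset.mem_filter, Finset.mem_range] at hk
      have hk1 : k = 1 := by omega
      subst hk1
      simp
  rw [hlow]
  have hterm : ∀ k : ℕ, ((k : ℤ) - 1) • MvPolynomial.esymm (Fin d) ℤ k =
      -((1 - (k : R)) * MvPolynomial.esymm (Fin d) ℤ k) := by
    intro k
    rw [zsmul_eq_mul]
    push_cast
    ring
  simp only [hterm]
  rw [Finset.sum_neg_distrib]
  ring
end

section
/- For d = 2, the generating function ∑_{m_1,m_2 ≥ 0} c(m_1,m_2) x^{m_1} y^{m_2} equals xy / ((1-x)(1-y)(1-xy)). -/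
open MvPolynomial Finset

/-- `c` extended by `0` when some `m_i = 0`. -/
noncomputable def cFull (d : ℕ) (m : Fin d → ℕ) : ℤ :=
  if ∀ i, 1 ≤ m i then c d m else 0

/-- The generating function `∑ c(m_1,m_2) x^{m_1} y^{m_2}` for `d = 2`. -/
noncomputable def Cser2 : MvPowerSeries (Fin 2) ℤ :=
  fun e => cFull 2 (fun i => e i)

lemma c_two (m : Fin 2 → ℕ) : c 2 m = ((min (m 0) (m 1) : ℕ) : ℤ) := by
  have h0 : that 2 0 = X 1 := by
    unfold that; rw [Fin.sum_univ_two]; ring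
  have h1 : that 2 1 = X 0 := by
    unfold that; rw [Fin.sum_univ_two]; ring
  unfold c cPoly
  rw [Fin.prod_univ_two, h0, h1, Finset.sum_mul_sum]
  rw [MvPolynomial.coeff_sum]
  simp only [MvPolynomial.coeff_sum]
  have key : ∀ k ∈ Finset.range (m 0), ∀ l ∈ Finset.range (m 1),
      MvPolynomial.coeff (Finsupp.equivFunOnFinite.symm fun i => m i - 1)
        (X (1 : Fin 2) ^ k * X 0 ^ (m 0 - 1 - k) * (X 0 ^ l * X 1 ^ (m 1 - 1 - l)))
      = if k = l then (1:ℤ) else 0 := by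
    intro k hk l hl
    rw [X_pow_eq_monomial, X_pow_eq_monomial, X_pow_eq_monomial, X_pow_eq_monomial,
      monomial_mul, monomial_mul, monomial_mul, coeff_monomial]
    simp only [mul_one]
    congr 1
    rw [eq_iff_iff]
    simp only [Finsupp.ext_iff, Fin.forall_fin_two, Finsupp.add_apply,
      Finsupp.single_apply, Finsupp.coe_equivFunOnFinite_symm]
    simp only [Finset.mem_range] at hk hl
    norm_num
    omega
  rw [Finset.sum_congr rfl (fun k hk => Finset.sum_congr rfl (fun l hl => key k hk l hl))]
  have h2 : ∀ k : ℕ, (∑ l ∈ Finset.range (m 1), if k = l then (1:ℤ) else 0)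
      = if k ∈ Finset.range (m 1) then (1:ℤ) else 0 := fun k =>
    Finset.sum_ite_eq (Finset.range (m 1)) k (fun _ => (1:ℤ))
  simp only [h2, Finset.sum_ite_mem, Finset.inter_self]
  rw [Finset.sum_const]
  have h3 : Finset.range (m 0) ∩ Finset.range (m 1) = Finset.range (min (m 0) (m 1)) := by
    ext x; simp [Nat.lt_min]
  rw [h3, Finset.card_range]
  simp

lemma cFull_two (m : Fin 2 → ℕ) : cFull 2 m = ((min (m 0) (m 1) : ℕ) : ℤ) := by
  unfold cFull
  split_ifs with h
  · exact c_two m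
  · rw [Fin.forall_fin_two] at h
    omega

lemma coeff_Cser2 (e : Fin 2 →₀ ℕ) :
    MvPowerSeries.coeff e Cser2 = ((min (e 0) (e 1) : ℕ) : ℤ) := by
  rw [MvPowerSeries.coeff_apply]
  show cFull 2 (fun i => e i) = _
  rw [cFull_two]

lemma coeff_mul_one_sub_X' (f : MvPowerSeries (Fin 2) ℤ) (s : Fin 2) (n : Fin 2 →₀ ℕ) :
    MvPowerSeries.coeff n (f * (1 - MvPowerSeries.X s)) =
      MvPowerSeries.coeff n f -
        (if 1 ≤ n s then MvPowerSeries.coeff (n - Finsupp.single s 1) f else 0) := by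
  rw [mul_sub, mul_one, map_sub, MvPowerSeries.X_def, MvPowerSeries.coeff_mul_monomial]
  simp [Finsupp.single_le_iff]

lemma coeff_mul_one_sub_XY' (f : MvPowerSeries (Fin 2) ℤ) (n : Fin 2 →₀ ℕ) :
    MvPowerSeries.coeff n (f * (1 - MvPowerSeries.X 0 * MvPowerSeries.X 1)) =
      MvPowerSeries.coeff n f -
        (if 1 ≤ n 0 ∧ 1 ≤ n 1 then
          MvPowerSeries.coeff (n - (Finsupp.single 0 1 + Finsupp.single 1 1)) f else 0) := by
  rw [mul_sub, mul_one, map_sub, MvPowerSeries.X_def, MvPowerSeries.X_def,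
    MvPowerSeries.monomial_mul_monomial, MvPowerSeries.coeff_mul_monomial]
  have h : Finsupp.single (0 : Fin 2) 1 + Finsupp.single 1 1 ≤ n ↔ 1 ≤ n 0 ∧ 1 ≤ n 1 := by
    rw [Finsupp.le_def]
    simp only [Fin.forall_fin_two, Finsupp.add_apply, Finsupp.single_apply]
    norm_num
  simp [h]

/-- Intermediate series `∑_{1 ≤ m ≤ n} x^m y^n`. -/
noncomputable def Sone : MvPowerSeries (Fin 2) ℤ :=
  fun e => if 1 ≤ e 0 ∧ e 0 ≤ e 1 then 1 else 0

/-- Intermediate series `∑_{m = n ≥ 1} x^m y^n`. -/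
noncomputable def Stwo : MvPowerSeries (Fin 2) ℤ :=
  fun e => if e 0 = e 1 ∧ 1 ≤ e 0 then 1 else 0

lemma coeff_Sone (e : Fin 2 →₀ ℕ) :
    MvPowerSeries.coeff e Sone = if 1 ≤ e 0 ∧ e 0 ≤ e 1 then 1 else 0 := by
  rw [MvPowerSeries.coeff_apply]; rfl

lemma coeff_Stwo (e : Fin 2 →₀ ℕ) :
    MvPowerSeries.coeff e Stwo = if e 0 = e 1 ∧ 1 ≤ e 0 then 1 else 0 := by
  rw [MvPowerSeries.coeff_apply]; rfl

lemma sub_apply_simp (n : Fin 2 →₀ ℕ) (s : Fin 2) (i : Fin 2) :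
    ((n - Finsupp.single s 1 : Fin 2 →₀ ℕ)) i = n i - (if s = i then 1 else 0) := by
  rw [Finsupp.tsub_apply, Finsupp.single_apply]

lemma step1 : Cser2 * (1 - MvPowerSeries.X 0) = Sone := by
  ext n
  rw [coeff_mul_one_sub_X', coeff_Cser2, coeff_Cser2, coeff_Sone]
  rw [sub_apply_simp, sub_apply_simp]
  norm_num
  split_ifs <;> omega

lemma step2 : Sone * (1 - MvPowerSeries.X 1) = Stwo := by
  ext n
  rw [coeff_mul_one_sub_X', coeff_Sone, coeff_Sone, coeff_Stwo]
  rw [sub_apply_simp, sub_apply_simp]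
  norm_num
  split_ifs <;> omega

lemma step3 : Stwo * (1 - MvPowerSeries.X 0 * MvPowerSeries.X 1) =
    MvPowerSeries.X 0 * MvPowerSeries.X 1 := by
  ext n
  rw [coeff_mul_one_sub_XY', coeff_Stwo, coeff_Stwo]
  rw [MvPowerSeries.X_def, MvPowerSeries.X_def, MvPowerSeries.monomial_mul_monomial,
    MvPowerSeries.coeff_monomial, one_mul]
  have hrhs : (n = Finsupp.single (0 : Fin 2) 1 + Finsupp.single 1 1) ↔ (n 0 = 1 ∧ n 1 = 1) := by
    simp only [Finsupp.ext_iff, Fin.forall_fin_two, Finsupp.add_apply, Finsupp.single_apply]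
    norm_num
  simp only [hrhs, Finsupp.tsub_apply, Finsupp.add_apply, Finsupp.single_apply]
  norm_num
  split_ifs <;> omega

/-- `∑ c(m_1,m_2) x^{m_1} y^{m_2} = xy / ((1-x)(1-y)(1-xy))`, stated by multiplying
through by the (invertible) denominator.  Here `x = X 0`, `y = X 1`. -/
theorem gf_c_two :
    Cser2 * ((1 - MvPowerSeries.X 0) * (1 - MvPowerSeries.X 1) *
        (1 - MvPowerSeries.X 0 * MvPowerSeries.X 1)) =
      MvPowerSeries.X 0 * MvPowerSeries.X 1 := by
  rw [← mul_assoc, ← mul_assoc, step1, step2, step3]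
end
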